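/- Let S ⊆ ℝⁿ with ‖a‖ ≥ 1 for all a ∈ S, and S' := {(a,s) ∈ ℝ^{n+1} | a ∈ S, ‖a‖²s² ≤ 1}. If q(x,t) = ∑_{i=0}^d p_i(x) t^i is bounded on S', then for each i, there is D > 0 with |p_i(a)| ≤ D‖a‖^i for all a ∈ S; consequently p_i ∈ B_i(S). -/

import Mathlib

open MvPolynomial

lemma coeff_bound (d : ℕ) : ∃ D : ℝ, 0 < D ∧ ∀ (c : Fin (d+1) → ℝ) (B : ℝ),
    (∀ r ∈ Set.Icc (0:ℝ) 1, |∑ i, c i * r ^ (i:ℕ)| ≤ B) → ∀ i, |c i| ≤ D * B := by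
  set x : Fin (d+1) → ℝ := fun j => (j : ℝ) / (d+1) with hx
  have hxinj : Function.Injective x := by
    intro a b hab
    have hd : (0:ℝ) < (d:ℝ) + 1 := by positivity
    have : (a : ℝ) = b := by
      simp only [hx, div_left_inj' hd.ne'] at hab
      exact_mod_cast hab
    exact Fin.ext (by exact_mod_cast this)
  set A : Matrix (Fin (d+1)) (Fin (d+1)) ℝ := Matrix.vandermonde x with hA
  have hdet : A.det ≠ 0 := by
    rw [hA, Matrix.det_vandermonde]
    refine Finset.prod_ne_zero_iff.2 fun i _ => Finset.prod_ne_zero_iff.2 fun j hj => ?_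
    have : i < j := Finset.mem_Ioi.mp hj
    exact sub_ne_zero.2 fun h => this.ne' (hxinj h)
  refine ⟨(∑ i, ∑ j, |A⁻¹ i j|) + 1, by positivity, ?_⟩
  intro c B h i
  have hB : 0 ≤ B := le_trans (abs_nonneg _) (h 0 ⟨le_refl 0, zero_le_one⟩)
  set v : Fin (d+1) → ℝ := A.mulVec c with hv
  have hvle : ∀ j, |v j| ≤ B := by
    intro j
    have hx0 : (0:ℝ) ≤ x j := by positivity
    have hx1 : x j ≤ 1 := by
      rw [hx, div_le_one (by positivity)]
      have hj2 : (j : ℕ) < d + 1 := j.2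
      have : ((j:ℕ) : ℝ) ≤ (d:ℝ) + 1 := by exact_mod_cast hj2.le
      exact this
    have := h (x j) ⟨hx0, hx1⟩
    convert this using 2
    rw [hv, Matrix.mulVec, hA]
    simp [Matrix.vandermonde, dotProduct, mul_comm]
  have hc : c = A⁻¹.mulVec v := by
    rw [hv, Matrix.mulVec_mulVec, Matrix.nonsing_inv_mul A (Ne.isUnit hdet), Matrix.one_mulVec]
  calc |c i| = |∑ j, A⁻¹ i j * v j| := by rw [hc]; rfl
    _ ≤ ∑ j, |A⁻¹ i j * v j| := Finset.abs_sum_le_sum_abs _ _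
    _ ≤ ∑ j, |A⁻¹ i j| * B := by
        refine Finset.sum_le_sum fun j _ => ?_
        rw [abs_mul]
        exact mul_le_mul_of_nonneg_left (hvle j) (abs_nonneg _)
    _ = (∑ j, |A⁻¹ i j|) * B := by rw [Finset.sum_mul]
    _ ≤ ((∑ i, ∑ j, |A⁻¹ i j|) + 1) * B := by
        refine mul_le_mul_of_nonneg_right ?_ hB
        calc ∑ j, |A⁻¹ i j| ≤ ∑ i, ∑ j, |A⁻¹ i j| :=
              Finset.single_le_sum (f := fun i => ∑ j, |A⁻¹ i j|)
                (fun i _ => Finset.sum_nonneg fun j _ => abs_nonneg _) (Finset.mem_univ i)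
          _ ≤ _ := by linarith

def Bset (n d : ℕ) (S : Set (Fin n → ℝ)) : Set (MvPolynomial (Fin n) ℝ) :=
  {p | ∃ q : MvPolynomial (Fin n) ℝ, q.totalDegree ≤ 2 * d ∧ ∀ a ∈ S, (eval a p) ^ 2 ≤ eval a q}

theorem bounded_on_S'_gives_Bi (n d : ℕ) (S : Set (Fin n → ℝ))
    (hS : ∀ a ∈ S, 1 ≤ ∑ j, (a j) ^ 2)
    (p : ℕ → MvPolynomial (Fin n) ℝ) (C : ℝ)
    (hq : ∀ a ∈ S, ∀ s : ℝ, (∑ j, (a j) ^ 2) * s ^ 2 ≤ 1 →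
      |∑ i ∈ Finset.range (d + 1), eval a (p i) * s ^ i| ≤ C) :
    ∀ i ≤ d,
      (∃ D : ℝ, 0 < D ∧ ∀ a ∈ S,
        |eval a (p i)| ≤ D * (Real.sqrt (∑ j, (a j) ^ 2)) ^ i) ∧
      p i ∈ Bset n i S := by
  intro i hi
  rcases S.eq_empty_or_nonempty with hSe | ⟨a₀, ha₀⟩
  · subst hSe
    exact ⟨⟨1, one_pos, fun a ha => absurd ha (Set.notMem_empty a)⟩,
      ⟨0, by simp, fun a ha => absurd ha (Set.notMem_empty a)⟩⟩
  have hC : 0 ≤ C := le_trans (abs_nonneg _) (hq a₀ ha₀ 0 (by simp))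
  obtain ⟨D₀, hD₀, hD₀b⟩ := coeff_bound d
  set D : ℝ := D₀ * C + 1 with hD
  have hDpos : 0 < D := by positivity
  have key : ∀ a ∈ S, |eval a (p i)| ≤ D * (Real.sqrt (∑ j, (a j) ^ 2)) ^ i := by
    intro a ha
    set N : ℝ := Real.sqrt (∑ j, (a j) ^ 2) with hN
    have hN1 : 1 ≤ N := by
      rw [hN, show (1:ℝ) = Real.sqrt 1 from (Real.sqrt_one).symm]
      exact Real.sqrt_le_sqrt (hS a ha)
    have hNpos : 0 < N := lt_of_lt_of_le one_pos hN1
    have hNsq : N ^ 2 = ∑ j, (a j) ^ 2 := Real.sq_sqrt (Finset.sum_nonneg fun j _ => sq_nonneg _)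
    set c : Fin (d+1) → ℝ := fun k => eval a (p (k:ℕ)) / N ^ (k:ℕ) with hc
    have hcb : ∀ r ∈ Set.Icc (0:ℝ) 1, |∑ k, c k * r ^ (k:ℕ)| ≤ C := by
      intro r hr
      have hs : (∑ j, (a j) ^ 2) * (r / N) ^ 2 ≤ 1 := by
        rw [← hNsq, div_pow]
        have h2 : N ^ 2 * (r ^ 2 / N ^ 2) = r ^ 2 := by field_simp
        rw [h2]
        calc r ^ 2 ≤ 1 ^ 2 := pow_le_pow_left₀ hr.1 hr.2 2
          _ = 1 := one_pow 2
      have := hq a ha (r / N) hs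
      convert this using 2
      rw [show (∑ k : Fin (d+1), c k * r ^ (k:ℕ))
          = ∑ k : Fin (d+1), (fun m : ℕ => eval a (p m) / N ^ m * r ^ m) (k:ℕ) from rfl,
        Fin.sum_univ_eq_sum_range (fun m : ℕ => eval a (p m) / N ^ m * r ^ m) (d+1)]
      refine Finset.sum_congr rfl fun k _ => ?_
      rw [div_pow]
      field_simp
    have hci := hD₀b c C hcb ⟨i, by omega⟩
    have hNi : (0:ℝ) < N ^ i := by positivity
    have heval : eval a (p i) = c ⟨i, by omega⟩ * N ^ i := by
      rw [hc]; field_simp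
    rw [heval, abs_mul, abs_of_pos hNi]
    refine mul_le_mul_of_nonneg_right ?_ hNi.le
    calc |c ⟨i, by omega⟩| ≤ D₀ * C := hci
      _ ≤ D := by rw [hD]; linarith
  refine ⟨⟨D, hDpos, key⟩, ?_⟩
  refine ⟨MvPolynomial.C (D ^ 2) * (∑ j, X j ^ 2) ^ i, ?_, ?_⟩
  · calc (MvPolynomial.C (D ^ 2) * (∑ j, X j ^ 2) ^ i).totalDegree
        ≤ (MvPolynomial.C (D ^ 2) : MvPolynomial (Fin n) ℝ).totalDegree
          + ((∑ j, X j ^ 2 : MvPolynomial (Fin n) ℝ) ^ i).totalDegree := totalDegree_mul _ _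
      _ = ((∑ j, X j ^ 2 : MvPolynomial (Fin n) ℝ) ^ i).totalDegree := by
          rw [totalDegree_C, zero_add]
      _ ≤ i * (∑ j, X j ^ 2 : MvPolynomial (Fin n) ℝ).totalDegree := totalDegree_pow _ _
      _ ≤ i * 2 := by
          refine Nat.mul_le_mul_left i ?_
          refine le_trans (totalDegree_finset_sum _ _) ?_
          refine Finset.sup_le fun j _ => ?_
          simp [totalDegree_X_pow (R := ℝ) j 2]
      _ = 2 * i := Nat.mul_comm i 2
  · intro a ha
    have hb := key a ha
    set N : ℝ := Real.sqrt (∑ j, (a j) ^ 2) with hN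
    have hNsq : N ^ 2 = ∑ j, (a j) ^ 2 := Real.sq_sqrt (Finset.sum_nonneg fun j _ => sq_nonneg _)
    have hN0 : 0 ≤ N := Real.sqrt_nonneg _
    have h1 : (eval a (p i)) ^ 2 ≤ (D * N ^ i) ^ 2 := by
      rw [← sq_abs]
      exact pow_le_pow_left₀ (abs_nonneg _) hb 2
    calc (eval a (p i)) ^ 2 ≤ (D * N ^ i) ^ 2 := h1
      _ = D ^ 2 * (N ^ 2) ^ i := by ring
      _ = eval a (MvPolynomial.C (D ^ 2) * (∑ j, X j ^ 2) ^ i) := by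
          rw [hNsq]; simp [eval_prod]
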